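/- For every integer k with 1 ≤ k ≤ n and every binary string x of length n, the number of binary strings y of length n with y ≠ x such that x and y are k-confusable is at most 2n^{2k}. -/

import Mathlib

/-- `Subseq k x` is the set of all subsequences of `x` obtained by deleting exactly `k` symbols,
i.e. all subsequences of `x` of length `|x| - k`. -/
def Subseq {α : Type*} (k : ℕ) (x : List α) : Set (List α) :=
  {y | y.Sublist x ∧ y.length + k = x.length}

/-- Two strings are `k`-confusable if they have a common output on the `k`-deletion channel. -/
def Confusable {α : Type*} (k : ℕ) (x y : List α) : Prop :=
  (Subseq k x ∩ Subseq k y).Nonempty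

/-- Sets of sublists (with any extra property) are finite. -/
lemma aux_finite_sub (x : List Bool) (P : List Bool → Prop) :
    {z : List Bool | z.Sublist x ∧ P z}.Finite :=
  (List.finite_length_le Bool x.length).subset (fun z hz => hz.1.length_le)

lemma aux_finite_sup (L : ℕ) (P : List Bool → Prop) :
    {y : List Bool | y.length = L ∧ P y}.Finite :=
  (List.finite_length_eq Bool L).subset (fun y hy => hy.1)

/-- There are at most `2^N` binary strings of length `N`. -/
lemma aux_card_len : ∀ N : ℕ, {y : List Bool | y.length = N}.ncard ≤ 2 ^ N := by
  intro N
  induction N with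
  | zero =>
    have h : {y : List Bool | y.length = 0} ⊆ {[]} := by
      intro y hy; simp only [Set.mem_setOf_eq, List.length_eq_zero_iff] at hy; simp [hy]
    calc {y : List Bool | y.length = 0}.ncard ≤ ({[]} : Set (List Bool)).ncard :=
          Set.ncard_le_ncard h (Set.finite_singleton _)
      _ = 1 := Set.ncard_singleton _
      _ ≤ 2 ^ 0 := by norm_num
  | succ N ih =>
    set S : Set (List Bool) := {y | y.length = N} with hS
    have hSfin : S.Finite := List.finite_length_eq Bool N
    have hsub : {y : List Bool | y.length = N + 1} ⊆
        (List.cons true '' S) ∪ (List.cons false '' S) := by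
      intro y hy
      match y with
      | [] => simp at hy
      | b :: y' =>
        have hy' : y'.length = N := by simpa using hy
        cases b
        · right; exact ⟨y', hy', rfl⟩
        · left; exact ⟨y', hy', rfl⟩
    calc {y : List Bool | y.length = N + 1}.ncard
        ≤ ((List.cons true '' S) ∪ (List.cons false '' S)).ncard :=
          Set.ncard_le_ncard hsub (((hSfin.image _).union (hSfin.image _)))
      _ ≤ (List.cons true '' S).ncard + (List.cons false '' S).ncard :=
          Set.ncard_union_le _ _
      _ ≤ S.ncard + S.ncard :=
          Nat.add_le_add (Set.ncard_image_le hSfin) (Set.ncard_image_le hSfin)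
      _ ≤ 2 ^ N + 2 ^ N := Nat.add_le_add ih ih
      _ = 2 ^ (N + 1) := by ring

/-- Pascal-type identity for partial sums of binomial coefficients. -/
lemma aux_sum_choose (L m : ℕ) :
    ∑ i ∈ Finset.range (m + 2), (L + 1).choose i
      = ∑ i ∈ Finset.range (m + 2), L.choose i + ∑ i ∈ Finset.range (m + 1), L.choose i := by
  rw [Finset.sum_range_succ' (fun i => (L + 1).choose i),
      Finset.sum_range_succ' (fun i => L.choose i)]
  simp only [Nat.choose_succ_succ', Nat.choose_zero_right, Finset.sum_add_distrib]
  omega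

/-- The number of binary strings of length `L` containing a fixed string `z` of length `L - m`
as a subsequence is at most `∑_{i ≤ m} C(L, i)`. -/
lemma aux_sup_count : ∀ (L : ℕ) (z : List Bool) (m : ℕ), z.length + m = L →
    {y : List Bool | y.length = L ∧ z.Sublist y}.ncard
      ≤ ∑ i ∈ Finset.range (m + 1), L.choose i := by
  intro L
  induction L with
  | zero =>
    intro z m hm
    have h : {y : List Bool | y.length = 0 ∧ z.Sublist y} ⊆ {[]} := by
      intro y hy; simp only [Set.mem_setOf_eq, List.length_eq_zero_iff] at hy; simp [hy.1]
    have h1 : {y : List Bool | y.length = 0 ∧ z.Sublist y}.ncard ≤ 1 := by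
      calc _ ≤ ({[]} : Set (List Bool)).ncard := Set.ncard_le_ncard h (Set.finite_singleton _)
        _ = 1 := Set.ncard_singleton _
    refine h1.trans ?_
    calc 1 = (0 : ℕ).choose 0 := rfl
      _ ≤ ∑ i ∈ Finset.range (m + 1), (0 : ℕ).choose i :=
        Finset.single_le_sum (f := fun i => (0 : ℕ).choose i) (fun _ _ => Nat.zero_le _)
          (Finset.mem_range.mpr (Nat.succ_pos m))
  | succ L ihL =>
    intro z m hm
    cases m with
    | zero =>
      have h : {y : List Bool | y.length = L + 1 ∧ z.Sublist y} ⊆ {z} := by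
        rintro y ⟨hlen, hzy⟩
        have : z = y := hzy.eq_of_length (by omega)
        simp [this.symm]
      calc {y : List Bool | y.length = L + 1 ∧ z.Sublist y}.ncard
          ≤ ({z} : Set (List Bool)).ncard := Set.ncard_le_ncard h (Set.finite_singleton _)
        _ = 1 := Set.ncard_singleton _
        _ = (L + 1).choose 0 := rfl
        _ ≤ ∑ i ∈ Finset.range 1, (L + 1).choose i := by simp
    | succ m' =>
     cases z with
     | nil =>
       have hm' : m' = L := by simpa using hm
       subst hm'
       have h : {y : List Bool | y.length = m' + 1 ∧ ([] : List Bool).Sublist y}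
           = {y : List Bool | y.length = m' + 1} := by
         ext y; simp
       rw [h]
       calc {y : List Bool | y.length = m' + 1}.ncard ≤ 2 ^ (m' + 1) := aux_card_len (m' + 1)
         _ = ∑ i ∈ Finset.range (m' + 1 + 1), (m' + 1).choose i :=
             (Nat.sum_range_choose (m' + 1)).symm
     | cons a z' =>
       set S1 : Set (List Bool) := {y' | y'.length = L ∧ z'.Sublist y'} with hS1
       set S2 : Set (List Bool) := {y' | y'.length = L ∧ (a :: z').Sublist y'} with hS2
       have hS1fin : S1.Finite := aux_finite_sup L _
       have hS2fin : S2.Finite := aux_finite_sup L _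
       have hsub : {y : List Bool | y.length = L + 1 ∧ (a :: z').Sublist y}
           ⊆ (List.cons a '' S1) ∪ (List.cons (!a) '' S2) := by
         rintro y ⟨hlen, hzy⟩
         match y with
         | [] => simp at hlen
         | b :: y' =>
           have hy' : y'.length = L := by simpa using hlen
           cases hzy with
           | cons_cons _ h =>
             left; exact ⟨y', ⟨hy', h⟩, rfl⟩
           | cons _ h =>
             by_cases hb : b = a
             · left
               exact ⟨y', ⟨hy', (List.sublist_cons_self a z').trans h⟩, by rw [hb]⟩
             · right
               have : b = !a := Bool.eq_not_iff.mpr hb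
               exact ⟨y', ⟨hy', h⟩, by rw [this]⟩
       have hlen1 : z'.length + (m' + 1) = L := by
         simp only [List.length_cons] at hm; omega
       have hlen2 : (a :: z').length + m' = L := by
         simp only [List.length_cons] at hm ⊢; omega
       calc {y : List Bool | y.length = L + 1 ∧ (a :: z').Sublist y}.ncard
           ≤ ((List.cons a '' S1) ∪ (List.cons (!a) '' S2)).ncard :=
             Set.ncard_le_ncard hsub ((hS1fin.image _).union (hS2fin.image _))
         _ ≤ (List.cons a '' S1).ncard + (List.cons (!a) '' S2).ncard := Set.ncard_union_le _ _
         _ ≤ S1.ncard + S2.ncard :=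
             Nat.add_le_add (Set.ncard_image_le hS1fin) (Set.ncard_image_le hS2fin)
         _ ≤ ∑ i ∈ Finset.range (m' + 1 + 1), L.choose i
               + ∑ i ∈ Finset.range (m' + 1), L.choose i :=
             Nat.add_le_add (ihL z' (m' + 1) hlen1) (ihL (a :: z') m' hlen2)
         _ = ∑ i ∈ Finset.range (m' + 1 + 1), (L + 1).choose i := (aux_sum_choose L m').symm

/-- The number of subsequences of `x` obtained by deleting exactly `k` symbols is at most
`C(|x|, k)`. -/
lemma aux_sub_count : ∀ (x : List Bool) (k : ℕ),
    {z : List Bool | z.Sublist x ∧ z.length + k = x.length}.ncard ≤ x.length.choose k := by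
  intro x
  induction x with
  | nil =>
    intro k
    cases k with
    | zero =>
      have h : {z : List Bool | z.Sublist [] ∧ z.length + 0 = ([] : List Bool).length} ⊆ {[]} := by
        intro z hz
        have := List.sublist_nil.mp hz.1
        simp [this]
      calc _ ≤ ({[]} : Set (List Bool)).ncard := Set.ncard_le_ncard h (Set.finite_singleton _)
        _ = 1 := Set.ncard_singleton _
        _ ≤ _ := by simp
    | succ k' =>
      have h : {z : List Bool | z.Sublist [] ∧ z.length + (k' + 1) = ([] : List Bool).length}
          = ∅ := by
        ext z; simp
      rw [h]; simp
  | cons a x' ih =>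
    intro k
    cases k with
    | zero =>
      have h : {z : List Bool | z.Sublist (a :: x') ∧ z.length + 0 = (a :: x').length}
          ⊆ {a :: x'} := by
        rintro z ⟨hz, hlen⟩
        have : z = a :: x' := hz.eq_of_length (by omega)
        simp [this]
      calc _ ≤ ({a :: x'} : Set (List Bool)).ncard := Set.ncard_le_ncard h (Set.finite_singleton _)
        _ = 1 := Set.ncard_singleton _
        _ ≤ _ := by simp
    | succ k' =>
      set S1 : Set (List Bool) := {z | z.Sublist x' ∧ z.length + (k' + 1) = x'.length} with hS1d
      set S2 : Set (List Bool) := {z | z.Sublist x' ∧ z.length + k' = x'.length} with hS2d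
      have hS1fin : S1.Finite := aux_finite_sub x' _
      have hS2fin : S2.Finite := aux_finite_sub x' _
      have hsub : {z : List Bool | z.Sublist (a :: x') ∧ z.length + (k' + 1) = (a :: x').length}
          ⊆ (List.cons a '' S1) ∪ S2 := by
        rintro z ⟨hz, hlen⟩
        simp only [List.length_cons] at hlen
        cases hz with
        | cons _ h =>
          right
          exact ⟨h, by have := h.length_le; omega⟩
        | cons_cons _ h =>
          left
          refine ⟨_, ⟨h, ?_⟩, rfl⟩
          simp only [List.length_cons] at hlen
          omega
      calc {z : List Bool | z.Sublist (a :: x') ∧ z.length + (k' + 1) = (a :: x').length}.ncard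
          ≤ ((List.cons a '' S1) ∪ S2).ncard :=
            Set.ncard_le_ncard hsub ((hS1fin.image _).union hS2fin)
        _ ≤ (List.cons a '' S1).ncard + S2.ncard := Set.ncard_union_le _ _
        _ ≤ S1.ncard + S2.ncard := Nat.add_le_add_right (Set.ncard_image_le hS1fin) _
        _ ≤ x'.length.choose (k' + 1) + x'.length.choose k' :=
            Nat.add_le_add (ih (k' + 1)) (ih k')
        _ = (x'.length + 1).choose (k' + 1) := by
            rw [Nat.choose_succ_succ', Nat.add_comm]
        _ = (a :: x').length.choose (k' + 1) := by simp

lemma aux_succ_le_two_factorial : ∀ k : ℕ, k + 1 ≤ 2 * k.factorial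
  | 0 => by norm_num
  | 1 => by norm_num [Nat.factorial]
  | (k + 2) => by
    have ih := aux_succ_le_two_factorial (k + 1)
    have h : 2 * (k + 2).factorial = (k + 2) * (2 * (k + 1).factorial) := by
      rw [Nat.factorial_succ]; ring
    calc k + 2 + 1 ≤ (k + 2) * (k + 2) := by nlinarith
      _ ≤ (k + 2) * (2 * (k + 1).factorial) := Nat.mul_le_mul_left _ ih
      _ = 2 * (k + 2).factorial := h.symm

theorem stmt_5 (k n : ℕ) (hk : 1 ≤ k) (hkn : k ≤ n)
    (x : List Bool) (hx : x.length = n) :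
    {y : List Bool | y.length = n ∧ y ≠ x ∧ Confusable k x y}.ncard ≤ 2 * n ^ (2 * k) := by
  subst hx
  set n := x.length with hn
  have hn1 : 1 ≤ n := le_trans hk hkn
  -- the set of possible intermediate strings
  have hZfin : (Subseq k x).Finite := aux_finite_sub x _
  set ZF : Finset (List Bool) := hZfin.toFinset with hZF
  -- supersequence sets
  set Sup : List Bool → Set (List Bool) := fun z => {y | y.length = n ∧ z.Sublist y} with hSup
  have hSupfin : ∀ z, (Sup z).Finite := fun z => aux_finite_sup n _
  set B : ℕ := ∑ i ∈ Finset.range (k + 1), n.choose i with hB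
  -- covering
  have hcover : {y : List Bool | y.length = n ∧ y ≠ x ∧ Confusable k x y}
      ⊆ ↑(ZF.biUnion (fun z => (hSupfin z).toFinset)) := by
    rintro y ⟨hylen, _, z, hzx, hzy⟩
    simp only [Finset.coe_biUnion, Set.mem_iUnion, Finset.mem_coe, Finset.mem_biUnion]
    exact ⟨z, hZfin.mem_toFinset.mpr hzx, (hSupfin z).mem_toFinset.mpr ⟨hylen, hzy.1⟩⟩
  have h1 : {y : List Bool | y.length = n ∧ y ≠ x ∧ Confusable k x y}.ncard
      ≤ (ZF.biUnion (fun z => (hSupfin z).toFinset)).card := by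
    rw [← Set.ncard_coe_finset]
    exact Set.ncard_le_ncard hcover (Finset.finite_toSet _)
  have h2 : (ZF.biUnion (fun z => (hSupfin z).toFinset)).card
      ≤ ∑ z ∈ ZF, ((hSupfin z).toFinset).card := Finset.card_biUnion_le
  have h3 : ∀ z ∈ ZF, ((hSupfin z).toFinset).card ≤ B := by
    intro z hz
    have hzx : z ∈ Subseq k x := hZfin.mem_toFinset.mp hz
    have hlen : z.length + k = n := hzx.2
    rw [← Set.ncard_eq_toFinset_card _ (hSupfin z)]
    exact aux_sup_count n z k hlen
  have h4 : ∑ z ∈ ZF, ((hSupfin z).toFinset).card ≤ ZF.card * B := by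
    calc ∑ z ∈ ZF, ((hSupfin z).toFinset).card ≤ ∑ _z ∈ ZF, B := Finset.sum_le_sum h3
      _ = ZF.card * B := by rw [Finset.sum_const, smul_eq_mul]
  have hZcard : ZF.card ≤ n.choose k := by
    rw [← Set.ncard_eq_toFinset_card _ hZfin]
    exact aux_sub_count x k
  -- bound B
  have hBle : B ≤ (k + 1) * n ^ k := by
    have : ∀ i ∈ Finset.range (k + 1), n.choose i ≤ n ^ k := by
      intro i hi
      have hik : i ≤ k := Nat.lt_succ_iff.mp (Finset.mem_range.mp hi)
      calc n.choose i ≤ n.choose i * i.factorial :=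
            Nat.le_mul_of_pos_right _ i.factorial_pos
        _ = n.descFactorial i := by rw [Nat.descFactorial_eq_factorial_mul_choose]; ring
        _ ≤ n ^ i := Nat.descFactorial_le_pow n i
        _ ≤ n ^ k := Nat.pow_le_pow_right hn1 hik
    calc B ≤ ∑ _i ∈ Finset.range (k + 1), n ^ k := Finset.sum_le_sum this
      _ = (k + 1) * n ^ k := by rw [Finset.sum_const, smul_eq_mul, Finset.card_range]
  -- final arithmetic
  have hfin : n.choose k * ((k + 1) * n ^ k) ≤ 2 * n ^ (2 * k) := by
    have hck : n.choose k * k.factorial ≤ n ^ k := by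
      calc n.choose k * k.factorial = n.descFactorial k := by
            rw [Nat.descFactorial_eq_factorial_mul_choose]; ring
        _ ≤ n ^ k := Nat.descFactorial_le_pow n k
    calc n.choose k * ((k + 1) * n ^ k)
        ≤ n.choose k * ((2 * k.factorial) * n ^ k) := by
          apply Nat.mul_le_mul_left
          exact Nat.mul_le_mul_right _ (aux_succ_le_two_factorial k)
      _ = 2 * ((n.choose k * k.factorial) * n ^ k) := by ring
      _ ≤ 2 * (n ^ k * n ^ k) := by
          apply Nat.mul_le_mul_left
          exact Nat.mul_le_mul_right _ hck
      _ = 2 * n ^ (2 * k) := by rw [← pow_add]; ring_nf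
  calc {y : List Bool | y.length = n ∧ y ≠ x ∧ Confusable k x y}.ncard
      ≤ ∑ z ∈ ZF, ((hSupfin z).toFinset).card := h1.trans h2
    _ ≤ ZF.card * B := h4
    _ ≤ n.choose k * ((k + 1) * n ^ k) := Nat.mul_le_mul hZcard hBle
    _ ≤ 2 * n ^ (2 * k) := hfin
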